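/- arXiv:2602.09405 — 2 statements merged into one kernel-verified Lean document; each statement's English description precedes it below -/
import Mathlib

section
/- Tweedie's formula: let p be a probability density on ℝⁿ with ∫_{ℝⁿ} ‖z‖·p(z) dz < ∞, let σ² > 0, let φ_{σ²}(z) = (2πσ²)^{−n/2}·exp(−‖z‖²/(2σ²)) be the density of N(0, σ²·I_n), and let p_{σ²} = p * φ_{σ²} be the convolution. Then p_{σ²} is everywhere positive and differentiable, and for every y ∈ ℝⁿ the posterior mean satisfies (∫_{ℝⁿ} z·φ_{σ²}(y − z)·p(z) dz) / p_{σ²}(y) = y + σ²·∇log p_{σ²}(y). -/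
set_option maxHeartbeats 1000000
set_option synthInstance.maxHeartbeats 400000
set_option linter.unusedVariables false


open MeasureTheory ProbabilityTheory Filter Set

noncomputable section

/-- Squared Euclidean norm of a vector in `Fin k → ℝ`. -/
def sqNorm {k : ℕ} (v : Fin k → ℝ) : ℝ := ∑ i, (v i) ^ 2

/-- Density of `N(0, t·I_n)` on `Fin n → ℝ`. -/
def gaussDensity {n : ℕ} (t : ℝ) (z : Fin n → ℝ) : ℝ :=
  (2 * Real.pi * t) ^ (-(n : ℝ) / 2) * Real.exp (-sqNorm z / (2 * t))

/-- Convolution `p_t = p * φ_t` of a density with the Gaussian density `φ_t`. -/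
def pConv {n : ℕ} (p : (Fin n → ℝ) → ℝ) (t : ℝ) (y : Fin n → ℝ) : ℝ :=
  ∫ z, p z * gaussDensity t (y - z)


namespace Stmt12

variable {n : ℕ}

lemma sqNorm_nonneg (v : Fin n → ℝ) : 0 ≤ sqNorm v :=
  Finset.sum_nonneg fun i _ => sq_nonneg _

lemma sqNorm_continuous : Continuous (sqNorm (k := n)) :=
  continuous_finset_sum _ fun i _ => (continuous_apply i).pow 2

lemma gauss_pos {t : ℝ} (ht : 0 < t) (z : Fin n → ℝ) : 0 < gaussDensity t z :=
  mul_pos (Real.rpow_pos_of_pos (by positivity) _) (Real.exp_pos _)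

lemma gauss_le {t : ℝ} (ht : 0 < t) (z : Fin n → ℝ) :
    gaussDensity t z ≤ (2 * Real.pi * t) ^ (-(n : ℝ) / 2) := by
  have h1 : Real.exp (-sqNorm z / (2 * t)) ≤ 1 := by
    apply Real.exp_le_one_iff.mpr
    have := sqNorm_nonneg z
    have h2t : 0 < 2 * t := by linarith
    apply div_nonpos_of_nonpos_of_nonneg <;> linarith
  calc gaussDensity t z ≤ (2 * Real.pi * t) ^ (-(n : ℝ) / 2) * 1 := by
        apply mul_le_mul_of_nonneg_left h1 (Real.rpow_pos_of_pos (by positivity) _).le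
    _ = _ := mul_one _

lemma gauss_continuous {t : ℝ} (ht : 0 < t) : Continuous (gaussDensity (n := n) t) :=
  continuous_const.mul (Real.continuous_exp.comp (sqNorm_continuous.neg.div_const _))

/-- The linear functional `v ↦ ∑ i, w i * v i`. -/
def L (w : Fin n → ℝ) : (Fin n → ℝ) →L[ℝ] ℝ :=
  ∑ i, w i • ContinuousLinearMap.proj i

lemma L_apply (w v : Fin n → ℝ) : L w v = ∑ i, w i * v i := by
  simp [L]

lemma L_single (w : Fin n → ℝ) (i : Fin n) : L w (Pi.single i 1) = w i := by
  rw [L_apply]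
  rw [Finset.sum_eq_single i]
  · simp
  · intro j _ hj; simp [Pi.single_apply, hj]
  · simp

lemma L_norm_le (w : Fin n → ℝ) : ‖L w‖ ≤ ∑ i, |w i| := by
  apply ContinuousLinearMap.opNorm_le_bound _ (Finset.sum_nonneg fun i _ => abs_nonneg _)
  intro v
  rw [L_apply]
  calc ‖∑ i, w i * v i‖ ≤ ∑ i, ‖w i * v i‖ := norm_sum_le _ _
    _ ≤ ∑ i, |w i| * ‖v‖ := by
        apply Finset.sum_le_sum
        intro i _
        rw [Real.norm_eq_abs, abs_mul]
        exact mul_le_mul_of_nonneg_left (norm_le_pi_norm v i) (abs_nonneg _)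
    _ = (∑ i, |w i|) * ‖v‖ := by rw [Finset.sum_mul]

lemma L_continuous : Continuous (L (n := n)) :=
  continuous_finset_sum _ fun i _ => (continuous_apply i).smul continuous_const

/-- Derivative of the Gaussian density. -/
def gDeriv (t : ℝ) (w : Fin n → ℝ) : (Fin n → ℝ) →L[ℝ] ℝ :=
  (-(1 / t) * gaussDensity t w) • L w

lemma gDeriv_continuous {t : ℝ} (ht : 0 < t) : Continuous (gDeriv (n := n) t) :=
  (continuous_const.mul (gauss_continuous ht)).smul L_continuous

lemma hasFDerivAt_gauss {t : ℝ} (ht : 0 < t) (w : Fin n → ℝ) :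
    HasFDerivAt (gaussDensity t) (gDeriv t w) w := by
  have hsq : HasFDerivAt (sqNorm (k := n)) ((2 : ℝ) • L w) w := by
    have h1 : HasFDerivAt (fun v : Fin n → ℝ => ∑ i, v i * v i)
        (∑ i, (w i • (ContinuousLinearMap.proj i (R := ℝ) (φ := fun _ : Fin n => ℝ)) +
          w i • (ContinuousLinearMap.proj i (R := ℝ) (φ := fun _ : Fin n => ℝ)))) w := by
      apply HasFDerivAt.fun_sum
      intro i _
      exact ((ContinuousLinearMap.proj i (R := ℝ) (φ := fun _ : Fin n => ℝ)).hasFDerivAt (x := w)).mul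
        ((ContinuousLinearMap.proj i (R := ℝ) (φ := fun _ : Fin n => ℝ)).hasFDerivAt (x := w))
    have h2 : (fun v : Fin n → ℝ => ∑ i, v i * v i) = sqNorm := by
      funext v; simp [sqNorm, sq]
    rw [h2] at h1
    convert h1 using 1
    any_goals rfl
    rw [L, Finset.smul_sum]
    congr 1; ext i : 1
    rw [smul_smul, ← add_smul]
    congr 1; ring
  have hf : HasFDerivAt (fun z : Fin n → ℝ => -sqNorm z / (2 * t))
      ((-(1 / (2 * t)) * 2) • L w) w := by
    have h3 : (fun z : Fin n → ℝ => -sqNorm z / (2 * t)) =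
        (fun z : Fin n → ℝ => -sqNorm z * (2 * t)⁻¹) := by
      funext z; rw [div_eq_mul_inv]
    rw [h3]
    have := (hsq.neg).mul_const ((2 * t)⁻¹)
    convert this using 1
    any_goals rfl
    rw [smul_neg, smul_smul, ← neg_smul]
    congr 1
    field_simp
  have hexp := hf.exp
  have := hexp.const_mul ((2 * Real.pi * t) ^ (-(n : ℝ) / 2))
  convert this using 1
  any_goals rfl
  rw [gDeriv, gaussDensity, smul_smul, smul_smul]
  congr 1
  field_simp

end Stmt12

namespace Stmt12
variable {n : ℕ}

lemma key_scalar {t x : ℝ} (ht : 0 < t) (hx : 0 ≤ x) :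
    x * Real.exp (-(x ^ 2) / (2 * t)) ≤ Real.sqrt (2 * t) := by
  have h2t : (0:ℝ) < 2 * t := by linarith
  have hs : 0 < Real.sqrt (2 * t) := Real.sqrt_pos.mpr h2t
  have hkey : x ≤ Real.sqrt (2 * t) * Real.exp (x ^ 2 / (2 * t)) := by
    rcases le_or_gt x (Real.sqrt (2 * t)) with h | h
    · calc x ≤ Real.sqrt (2 * t) := h
        _ = Real.sqrt (2 * t) * 1 := (mul_one _).symm
        _ ≤ _ := by
            apply mul_le_mul_of_nonneg_left _ hs.le
            exact Real.one_le_exp (by positivity)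
    · have he : x ^ 2 / (2 * t) ≤ Real.exp (x ^ 2 / (2 * t)) := by
        have := Real.add_one_le_exp (x ^ 2 / (2 * t))
        linarith
      have hsq : Real.sqrt (2 * t) ^ 2 = 2 * t := Real.sq_sqrt h2t.le
      calc x = Real.sqrt (2 * t) * (x / Real.sqrt (2 * t)) := by field_simp
        _ ≤ Real.sqrt (2 * t) * (x ^ 2 / (2 * t)) := by
            apply mul_le_mul_of_nonneg_left _ hs.le
            rw [div_le_div_iff₀ hs h2t]
            nlinarith [mul_nonneg (mul_nonneg hx hs.le) (sub_nonneg.mpr h.le), hsq]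
        _ ≤ _ := mul_le_mul_of_nonneg_left he hs.le
  calc x * Real.exp (-(x ^ 2) / (2 * t))
      ≤ (Real.sqrt (2 * t) * Real.exp (x ^ 2 / (2 * t))) * Real.exp (-(x ^ 2) / (2 * t)) :=
        mul_le_mul_of_nonneg_right hkey (Real.exp_pos _).le
    _ = Real.sqrt (2 * t) := by rw [mul_assoc, ← Real.exp_add]; ring_nf; rw [Real.exp_zero, mul_one]

/-- uniform bound on the norm of the Gaussian derivative. -/
noncomputable def M (n : ℕ) (t : ℝ) : ℝ :=
  (1 / t) * (2 * Real.pi * t) ^ (-(n : ℝ) / 2) * (n * Real.sqrt (2 * t))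

lemma gDeriv_norm_le {t : ℝ} (ht : 0 < t) (w : Fin n → ℝ) : ‖gDeriv t w‖ ≤ M n t := by
  have hC : (0:ℝ) < (2 * Real.pi * t) ^ (-(n : ℝ) / 2) := Real.rpow_pos_of_pos (by positivity) _
  set C := (2 * Real.pi * t) ^ (-(n : ℝ) / 2) with hCdef
  have hterm : ∀ i : Fin n, |w i| * Real.exp (-sqNorm w / (2 * t)) ≤ Real.sqrt (2 * t) := by
    intro i
    have h1 : Real.exp (-sqNorm w / (2 * t)) ≤ Real.exp (-(w i ^ 2) / (2 * t)) := by
      apply Real.exp_le_exp.mpr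
      apply div_le_div_of_nonneg_right _ (by linarith) |>.trans_eq rfl
      · have : w i ^ 2 ≤ sqNorm w := Finset.single_le_sum (fun j _ => sq_nonneg (w j)) (Finset.mem_univ i)
        linarith
    calc |w i| * Real.exp (-sqNorm w / (2 * t)) ≤ |w i| * Real.exp (-(w i ^ 2) / (2 * t)) :=
          mul_le_mul_of_nonneg_left h1 (abs_nonneg _)
      _ = |w i| * Real.exp (-(|w i| ^ 2) / (2 * t)) := by rw [sq_abs]
      _ ≤ Real.sqrt (2 * t) := key_scalar ht (abs_nonneg _)
  calc ‖gDeriv t w‖ ≤ ‖-(1 / t) * gaussDensity t w‖ * ‖L w‖ := ContinuousLinearMap.opNorm_smul_le _ _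
    _ ≤ (1 / t) * gaussDensity t w * ∑ i, |w i| := by
        apply mul_le_mul
        · rw [Real.norm_eq_abs, abs_mul, abs_neg, abs_of_nonneg (one_div_nonneg.mpr ht.le),
            abs_of_pos (gauss_pos ht w)]
        · exact L_norm_le w
        · exact norm_nonneg _
        · exact mul_nonneg (one_div_nonneg.mpr ht.le) (gauss_pos ht w).le
    _ = (1 / t) * C * ∑ i, |w i| * Real.exp (-sqNorm w / (2 * t)) := by
        have hg : gaussDensity t w = C * Real.exp (-sqNorm w / (2 * t)) := by
          rw [hCdef, gaussDensity]
        rw [hg, ← Finset.sum_mul]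
        ring
    _ ≤ (1 / t) * C * ∑ _i : Fin n, Real.sqrt (2 * t) := by
        apply mul_le_mul_of_nonneg_left (Finset.sum_le_sum fun i _ => hterm i) (by positivity)
    _ = M n t := by
        rw [Finset.sum_const, Finset.card_univ, Fintype.card_fin, nsmul_eq_mul, M, hCdef]

end Stmt12

namespace Stmt12
variable {n : ℕ}

variable {p : (Fin n → ℝ) → ℝ} {t : ℝ}

lemma int_pg (hpmeas : Measurable p) (hpnn : ∀ z, 0 ≤ p z) (hpint : Integrable p)
    (ht : 0 < t) (y : Fin n → ℝ) :
    Integrable (fun z => p z * gaussDensity t (y - z)) := by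
  apply Integrable.mono (hpint.const_mul ((2 * Real.pi * t) ^ (-(n : ℝ) / 2)))
  · exact (hpmeas.aestronglyMeasurable.mul
      (((gauss_continuous ht).comp (continuous_const.sub continuous_id)).aestronglyMeasurable))
  · filter_upwards with z
    rw [Real.norm_eq_abs, Real.norm_eq_abs, abs_mul,
      abs_of_nonneg (hpnn z), abs_of_pos (gauss_pos ht _)]
    have hC : (0:ℝ) < (2 * Real.pi * t) ^ (-(n : ℝ) / 2) := Real.rpow_pos_of_pos (by positivity) _
    rw [abs_of_nonneg (mul_nonneg hC.le (hpnn z))]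
    calc p z * gaussDensity t (y - z) ≤ p z * (2 * Real.pi * t) ^ (-(n : ℝ) / 2) :=
          mul_le_mul_of_nonneg_left (gauss_le ht _) (hpnn z)
      _ = (2 * Real.pi * t) ^ (-(n : ℝ) / 2) * p z := mul_comm _ _

lemma int_zg (hpmeas : Measurable p) (hpnn : ∀ z, 0 ≤ p z)
    (hmom : Integrable (fun z => Real.sqrt (sqNorm z) * p z))
    (ht : 0 < t) (y : Fin n → ℝ) (i : Fin n) :
    Integrable (fun z => z i * (gaussDensity t (y - z) * p z)) := by
  apply Integrable.mono (hmom.const_mul ((2 * Real.pi * t) ^ (-(n : ℝ) / 2)))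
  · apply AEStronglyMeasurable.mul (measurable_pi_apply i).aestronglyMeasurable
    exact (((gauss_continuous ht).comp (continuous_const.sub continuous_id)).aestronglyMeasurable).mul
      hpmeas.aestronglyMeasurable
  · filter_upwards with z
    have hC : (0:ℝ) < (2 * Real.pi * t) ^ (-(n : ℝ) / 2) := Real.rpow_pos_of_pos (by positivity) _
    have hzi : |z i| ≤ Real.sqrt (sqNorm z) := by
      rw [← Real.sqrt_sq_eq_abs]
      apply Real.sqrt_le_sqrt
      exact Finset.single_le_sum (fun j _ => sq_nonneg (z j)) (Finset.mem_univ i)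
    rw [Real.norm_eq_abs, Real.norm_eq_abs, abs_mul, abs_mul,
      abs_of_pos (gauss_pos ht _), abs_of_nonneg (hpnn z),
      abs_of_nonneg (mul_nonneg hC.le (mul_nonneg (Real.sqrt_nonneg _) (hpnn z)))]
    calc |z i| * (gaussDensity t (y - z) * p z)
        ≤ Real.sqrt (sqNorm z) * (gaussDensity t (y - z) * p z) :=
          mul_le_mul_of_nonneg_right hzi (mul_nonneg (gauss_pos ht _).le (hpnn z))
      _ ≤ Real.sqrt (sqNorm z) * ((2 * Real.pi * t) ^ (-(n : ℝ) / 2) * p z) := by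
          apply mul_le_mul_of_nonneg_left _ (Real.sqrt_nonneg _)
          exact mul_le_mul_of_nonneg_right (gauss_le ht _) (hpnn z)
      _ = (2 * Real.pi * t) ^ (-(n : ℝ) / 2) * (Real.sqrt (sqNorm z) * p z) := by ring

lemma int_pgd (hpmeas : Measurable p) (hpnn : ∀ z, 0 ≤ p z) (hpint : Integrable p)
    (ht : 0 < t) (y : Fin n → ℝ) :
    Integrable (fun z => p z • gDeriv t (y - z)) := by
  apply Integrable.mono (hpint.const_mul (M n t))
  · exact AEStronglyMeasurable.smul hpmeas.aestronglyMeasurable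
      ((gDeriv_continuous ht).comp (continuous_const.sub continuous_id)).aestronglyMeasurable
  · filter_upwards with z
    have hM : 0 ≤ M n t := le_trans (norm_nonneg _) (gDeriv_norm_le ht (y - z))
    rw [Real.norm_eq_abs, abs_of_nonneg (mul_nonneg hM (hpnn z))]
    calc ‖p z • gDeriv t (y - z)‖ ≤ ‖p z‖ * ‖gDeriv t (y - z)‖ :=
          ContinuousLinearMap.opNorm_smul_le _ _
      _ ≤ p z * M n t := by
          rw [Real.norm_eq_abs, abs_of_nonneg (hpnn z)]
          exact mul_le_mul_of_nonneg_left (gDeriv_norm_le ht _) (hpnn z)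
      _ = M n t * p z := mul_comm _ _

lemma pConv_pos (hpmeas : Measurable p) (hpnn : ∀ z, 0 ≤ p z) (hpint : Integrable p)
    (hpone : ∫ z, p z = 1) (ht : 0 < t) (y : Fin n → ℝ) : 0 < pConv p t y := by
  have hint := int_pg hpmeas hpnn hpint ht y
  have hnn : 0 ≤ pConv p t y :=
    integral_nonneg fun z => mul_nonneg (hpnn z) (gauss_pos ht _).le
  rcases hnn.lt_or_eq with h | h
  · exact h
  exfalso
  have hae : (fun z => p z * gaussDensity t (y - z)) =ᵐ[volume] 0 := by
    rw [← integral_eq_zero_iff_of_nonneg (fun z => mul_nonneg (hpnn z) (gauss_pos ht _).le) hint]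
    exact h.symm
  have hpae : p =ᵐ[volume] 0 := by
    filter_upwards [hae] with z hz
    have := gauss_pos (n := n) ht (y - z)
    rcases mul_eq_zero.mp hz with h' | h'
    · exact h'
    · exact absurd h' this.ne'
  have : (∫ z, p z) = 0 := by
    rw [integral_congr_ae hpae]; simp
  rw [hpone] at this
  exact one_ne_zero this

lemma hasFDerivAt_pConv (hpmeas : Measurable p) (hpnn : ∀ z, 0 ≤ p z) (hpint : Integrable p)
    (ht : 0 < t) (y : Fin n → ℝ) :
    HasFDerivAt (pConv p t) (∫ z, p z • gDeriv t (y - z)) y := by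
  have h := hasFDerivAt_integral_of_dominated_of_fderiv_le
    (F := fun (x : Fin n → ℝ) (z : Fin n → ℝ) => p z * gaussDensity t (x - z))
    (F' := fun (x : Fin n → ℝ) (z : Fin n → ℝ) => p z • gDeriv t (x - z))
    (x₀ := y) (bound := fun z => M n t * p z) (s := Metric.ball y 1) (Metric.ball_mem_nhds y one_pos)
    (Eventually.of_forall fun x =>
      (hpmeas.aestronglyMeasurable.mul
        (((gauss_continuous ht).comp (continuous_const.sub continuous_id)).aestronglyMeasurable)))
    (int_pg hpmeas hpnn hpint ht y)
    (AEStronglyMeasurable.smul hpmeas.aestronglyMeasurable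
      ((gDeriv_continuous ht).comp (continuous_const.sub continuous_id)).aestronglyMeasurable)
    ?_ ((hpint.const_mul (M n t))) ?_
  · exact h
  · filter_upwards with z x _
    calc ‖p z • gDeriv t (x - z)‖ ≤ ‖p z‖ * ‖gDeriv t (x - z)‖ :=
          ContinuousLinearMap.opNorm_smul_le _ _
      _ ≤ p z * M n t := by
          rw [Real.norm_eq_abs, abs_of_nonneg (hpnn z)]
          exact mul_le_mul_of_nonneg_left (gDeriv_norm_le ht _) (hpnn z)
      _ = M n t * p z := mul_comm _ _
  · filter_upwards with z x _
    have h1 : HasFDerivAt (fun x : Fin n → ℝ => x - z) (ContinuousLinearMap.id ℝ _) x :=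
      (hasFDerivAt_id x).sub_const z
    have h2 := (hasFDerivAt_gauss ht (x - z)).comp x h1
    have h3 := h2.const_mul (p z)
    rw [ContinuousLinearMap.comp_id] at h3
    exact h3

end Stmt12

/-- Tweedie's formula.  For a probability density `p` on `ℝⁿ` with finite first
moment and `t = σ² > 0`, the smoothed density `p_t = p * φ_t` is positive and differentiable,
and the posterior mean satisfies
`(∫ z·φ_t(y−z)·p(z) dz)/p_t(y) = y + t·∇ log p_t(y)` for every `y`. -/
theorem stmt_12 {n : ℕ} (hn : 1 ≤ n)
    (p : (Fin n → ℝ) → ℝ) (hpmeas : Measurable p) (hpnn : ∀ z, 0 ≤ p z)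
    (hpint : Integrable p) (hpone : ∫ z, p z = 1)
    (hmom : Integrable (fun z => Real.sqrt (sqNorm z) * p z))
    (t : ℝ) (ht : 0 < t) :
    (∀ y, 0 < pConv p t y) ∧ Differentiable ℝ (pConv p t) ∧
      ∀ (y : Fin n → ℝ) (i : Fin n),
        (∫ z, z i * (gaussDensity t (y - z) * p z)) / pConv p t y =
          y i + t * fderiv ℝ (fun w => Real.log (pConv p t w)) y (Pi.single i 1) := by
  refine ⟨Stmt12.pConv_pos hpmeas hpnn hpint hpone ht, fun y =>
    (Stmt12.hasFDerivAt_pConv hpmeas hpnn hpint ht y).differentiableAt, ?_⟩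
  intro y i
  set D : (Fin n → ℝ) →L[ℝ] ℝ := ∫ z, p z • Stmt12.gDeriv t (y - z) with hD
  have hP : 0 < pConv p t y := Stmt12.pConv_pos hpmeas hpnn hpint hpone ht y
  have hderiv := Stmt12.hasFDerivAt_pConv hpmeas hpnn hpint ht y
  have hlog : HasFDerivAt (fun w => Real.log (pConv p t w)) ((pConv p t y)⁻¹ • D) y :=
    hderiv.log hP.ne'
  rw [hlog.fderiv]
  have hDval : D (Pi.single i 1) =
      (-(1 / t)) * (y i * pConv p t y - ∫ z, z i * (gaussDensity t (y - z) * p z)) := by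
    rw [hD, ContinuousLinearMap.integral_apply (Stmt12.int_pgd hpmeas hpnn hpint ht y)]
    have hpt : ∀ z : Fin n → ℝ, (p z • Stmt12.gDeriv t (y - z)) (Pi.single i 1) =
        (-(1 / t)) * (y i * (p z * gaussDensity t (y - z)) -
          z i * (gaussDensity t (y - z) * p z)) := by
      intro z
      rw [ContinuousLinearMap.smul_apply, Stmt12.gDeriv, ContinuousLinearMap.smul_apply,
        Stmt12.L_single]
      have : (y - z) i = y i - z i := rfl
      rw [this]
      simp only [smul_eq_mul]
      ring
    simp only [hpt]
    rw [integral_const_mul]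
    congr 1
    rw [integral_sub (((Stmt12.int_pg hpmeas hpnn hpint ht y).const_mul (y i)))
      (Stmt12.int_zg hpmeas hpnn hmom ht y i), integral_const_mul]
    rfl
  rw [ContinuousLinearMap.smul_apply, hDval]
  simp only [smul_eq_mul]
  field_simp
  ring
end
end

section
/- Let d ≥ n ≥ 1, let X ∈ ℝ^{n×d} have full row rank n, let η ∈ (0,1], let K be an integer with 1 ≤ K ≤ d, and let S ⊆ {1,…,d} with |S| = K. Define Ω_S = ((1−η)/K)·Σ_{i∈S} e_ie_iᵀ + (η/d)·I_d. Then (1/n)·log det(X·Ω_S·Xᵀ) ≤ (1 − K/n)·log η + (K/n)·log(d/K) + (1/n)·log det(X·Xᵀ/d). -/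
open Matrix

noncomputable section

/-- The perturbed `K`-sparse covariance `Ω_S = ((1−η)/K)·Σ_{i∈S} eᵢeᵢᵀ + (η/d)·I_d`. -/
def OmegaS {d : ℕ} (η : ℝ) (K : ℕ) (S : Finset (Fin d)) : Matrix (Fin d) (Fin d) ℝ :=
  ((1 - η) / (K : ℝ)) • Matrix.diagonal (fun j => if j ∈ S then (1 : ℝ) else 0) +
    (η / (d : ℝ)) • (1 : Matrix (Fin d) (Fin d) ℝ)

lemma aux_smul_psd {m : Type*} [Fintype m] {a : ℝ} {M : Matrix m m ℝ}
    (ha : 0 ≤ a) (hM : M.PosSemidef) : (a • M).PosSemidef := by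
  have hsym : Mᵀ = M := by rw [← Matrix.conjTranspose_eq_transpose_of_trivial]; exact hM.1.eq
  refine Matrix.posSemidef_iff_dotProduct_mulVec.mpr ⟨?_, ?_⟩
  · simp [Matrix.IsHermitian, Matrix.conjTranspose_smul, hsym]
  · intro x
    rw [Matrix.smul_mulVec, dotProduct_smul]
    exact smul_nonneg ha (hM.dotProduct_mulVec_nonneg x)

lemma aux_eig_le {m : Type*} [Fintype m] [DecidableEq m] {B : Matrix m m ℝ} {β : ℝ}
    (hB : B.IsHermitian) (hβB : ((β • (1 : Matrix m m ℝ)) - B).PosSemidef) (i : m) :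
    hB.eigenvalues i ≤ β := by
  set v : m → ℝ := ⇑(hB.eigenvectorBasis i) with hv
  have hvv : dotProduct v v = 1 := by
    have h1 : ‖hB.eigenvectorBasis i‖ = 1 := hB.eigenvectorBasis.orthonormal.1 i
    have h2 : (inner ℝ (hB.eigenvectorBasis i) (hB.eigenvectorBasis i) : ℝ) = 1 := by
      rw [real_inner_self_eq_norm_mul_norm, h1]; norm_num
    rw [EuclideanSpace.inner_eq_star_dotProduct] at h2
    simpa using h2
  have h3 := hβB.dotProduct_mulVec_nonneg v
  rw [Matrix.sub_mulVec, Matrix.smul_mulVec, Matrix.one_mulVec,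
    dotProduct_sub, dotProduct_smul] at h3
  simp only [star_trivial, smul_eq_mul] at h3
  have h4 : hB.eigenvalues i = dotProduct v (B *ᵥ v) := by
    simpa using hB.eigenvalues_eq i
  rw [hvv] at h3
  linarith

lemma aux_det_one_add {m : Type*} [Fintype m] [DecidableEq m] {B : Matrix m m ℝ} {β : ℝ}
    (hB : B.PosSemidef) (hβB : ((β • (1 : Matrix m m ℝ)) - B).PosSemidef) :
    1 ≤ (1 + B).det ∧ (1 + B).det ≤ (1 + β) ^ (Fintype.card m) := by
  have hH := hB.1
  set U : Matrix m m ℝ := (hH.eigenvectorUnitary : Matrix m m ℝ) with hU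
  have hU1 : U * star U = 1 := Matrix.mem_unitaryGroup_iff.mp hH.eigenvectorUnitary.2
  have hspec : B = U * Matrix.diagonal (RCLike.ofReal ∘ hH.eigenvalues) * star U :=
    hH.spectral_theorem
  have key : 1 + B = U * (1 + Matrix.diagonal (RCLike.ofReal ∘ hH.eigenvalues)) * star U := by
    rw [mul_add, mul_one, add_mul, hU1, ← hspec]
  have hdet : (1 + B).det = ∏ i, (1 + hH.eigenvalues i) := by
    rw [key, det_mul, det_mul, mul_right_comm, ← det_mul, hU1, det_one, one_mul]
    rw [← Matrix.diagonal_one, Matrix.diagonal_add, Matrix.det_diagonal]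
    simp
  have hnn : ∀ i : m, 0 ≤ hH.eigenvalues i := fun i => hB.eigenvalues_nonneg i
  have hle : ∀ i : m, hH.eigenvalues i ≤ β := fun i => aux_eig_le hH hβB i
  constructor
  · rw [hdet]
    calc (1:ℝ) = ∏ _i : m, (1:ℝ) := by simp
    _ ≤ ∏ i, (1 + hH.eigenvalues i) :=
      Finset.prod_le_prod (fun i _ => zero_le_one) (fun i _ => by linarith [hnn i])
  · rw [hdet]
    calc ∏ i, (1 + hH.eigenvalues i) ≤ ∏ _i : m, (1 + β) :=
      Finset.prod_le_prod (fun i _ => by linarith [hnn i]) (fun i _ => by linarith [hle i])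
    _ = (1 + β) ^ (Fintype.card m) := by rw [Finset.prod_const, Finset.card_univ]


/-- the log-determinant bound
`(1/n)·log det(X Ω_S Xᵀ) ≤ (1 − K/n)·log η + (K/n)·log(d/K) + (1/n)·log det(X Xᵀ/d)`. -/
theorem stmt_17 {n d : ℕ} (hn : 1 ≤ n) (hnd : n ≤ d)
    (X : Matrix (Fin n) (Fin d) ℝ) (hX : X.rank = n)
    (η : ℝ) (hη0 : 0 < η) (hη1 : η ≤ 1)
    (K : ℕ) (hK1 : 1 ≤ K) (hKd : K ≤ d)
    (S : Finset (Fin d)) (hScard : S.card = K) :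
    (1 / (n : ℝ)) * Real.log (X * OmegaS η K S * Xᵀ).det ≤
      (1 - (K : ℝ) / (n : ℝ)) * Real.log η +
        ((K : ℝ) / (n : ℝ)) * Real.log ((d : ℝ) / (K : ℝ)) +
        (1 / (n : ℝ)) * Real.log ((d : ℝ)⁻¹ • (X * Xᵀ)).det := by

  have hd0 : (0:ℝ) < d := by exact_mod_cast (by omega : 0 < d)
  have hK0 : (0:ℝ) < K := by exact_mod_cast hK1
  have hn0 : (0:ℝ) < n := by exact_mod_cast hn
  have hKd' : (K:ℝ) ≤ d := by exact_mod_cast hKd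
  set G : Matrix (Fin n) (Fin n) ℝ := X * Xᵀ with hGdef
  set D : Matrix (Fin d) (Fin d) ℝ :=
    Matrix.diagonal (fun j => if j ∈ S then (1:ℝ) else 0) with hDdef
  set α : ℝ := (d:ℝ) * (1 - η) / ((K:ℝ) * η) with hαdef
  have hα : 0 ≤ α := by
    apply div_nonneg (by nlinarith) (by positivity)
  -- G is PSD with positive determinant
  have hGpsd : G.PosSemidef := by
    have := Matrix.posSemidef_self_mul_conjTranspose X
    rwa [Matrix.conjTranspose_eq_transpose_of_trivial] at this
  have hrank : G.rank = n := by rw [hGdef, Matrix.rank_self_mul_transpose, hX]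
  have heig0 : ∀ i, hGpsd.1.eigenvalues i ≠ 0 := by
    intro i hi
    have hcard := hGpsd.1.rank_eq_card_non_zero_eigs
    rw [hrank] at hcard
    have hlt : Fintype.card {j // hGpsd.1.eigenvalues j ≠ 0} < Fintype.card (Fin n) :=
      Fintype.card_subtype_lt (x := i) (by simpa using hi)
    rw [Fintype.card_fin] at hlt
    omega
  have hdetG : 0 < G.det := by
    rw [hGpsd.1.det_eq_prod_eigenvalues]
    refine Finset.prod_pos fun i _ => ?_
    have h1 := hGpsd.eigenvalues_nonneg i
    have h2 := heig0 i
    have : 0 < hGpsd.1.eigenvalues i := lt_of_le_of_ne h1 (Ne.symm h2)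
    exact_mod_cast this
  have hdetGne : G.det ≠ 0 := ne_of_gt hdetG
  have hGunit : IsUnit G.det := isUnit_iff_ne_zero.mpr hdetGne
  have hGinv_psd : G⁻¹.PosSemidef := hGpsd.inv
  -- selection matrix
  set P : Matrix (Fin d) {j // j ∈ S} ℝ :=
    Matrix.of (fun i j => if i = (j : Fin d) then (1:ℝ) else 0) with hPdef
  have hPtP : Pᵀ * P = 1 := by
    ext i j
    simp only [Matrix.mul_apply, Matrix.transpose_apply, hPdef, Matrix.of_apply,
      Matrix.one_apply, ite_mul, one_mul, zero_mul]
    rw [Finset.sum_ite_eq' Finset.univ (i : Fin d) (fun k => if k = (j:Fin d) then (1:ℝ) else 0)]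
    simp only [Finset.mem_univ, if_true, Subtype.ext_iff]
  have hPPt : P * Pᵀ = D := by
    ext i i'
    simp only [Matrix.mul_apply, Matrix.transpose_apply, hPdef, Matrix.of_apply,
      hDdef, Matrix.diagonal_apply, ite_mul, one_mul, zero_mul]
    rw [Finset.sum_coe_sort S (fun j => if i = j then (if i' = j then (1:ℝ) else 0) else 0)]
    rw [Finset.sum_ite_eq S i (fun j => if i' = j then (1:ℝ) else 0)]
    by_cases h1 : i = i'
    · subst h1; by_cases h2 : i ∈ S <;> simp [h2]
    · by_cases h2 : i ∈ S <;> simp [h1, h2, Ne.symm h1]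
  -- the projection 1 - Xᵀ G⁻¹ X is PSD
  set Q : Matrix (Fin d) (Fin d) ℝ := Xᵀ * G⁻¹ * X with hQdef
  have hGsym : Gᵀ = G := by rw [hGdef, Matrix.transpose_mul, Matrix.transpose_transpose]
  have hGinvsym : (G⁻¹)ᵀ = G⁻¹ := by rw [Matrix.transpose_nonsing_inv, hGsym]
  have hQsym : Qᵀ = Q := by
    rw [hQdef, Matrix.transpose_mul, Matrix.transpose_mul, Matrix.transpose_transpose,
      hGinvsym, Matrix.mul_assoc]
  have h5 : Q * Q = Q := by
    rw [hQdef]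
    simp only [Matrix.mul_assoc]
    rw [← Matrix.mul_assoc X Xᵀ (G⁻¹ * X), ← hGdef,
      ← Matrix.mul_assoc G⁻¹ G (G⁻¹ * X), Matrix.nonsing_inv_mul _ hGunit, Matrix.one_mul]
  have hidem : (1 - Q) * (1 - Q) = 1 - Q := by
    rw [sub_mul, one_mul, mul_sub, mul_one, h5]; abel
  have hRsym : (1 - Q)ᵀ = 1 - Q := by
    rw [Matrix.transpose_sub, Matrix.transpose_one, hQsym]
  have hQpsd : ((1 : Matrix (Fin d) (Fin d) ℝ) - Q).PosSemidef := by
    have h := Matrix.posSemidef_conjTranspose_mul_self (1 - Q)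
    rwa [Matrix.conjTranspose_eq_transpose_of_trivial, hRsym, hidem] at h
  -- H = (XP)ᵀ G⁻¹ (XP)
  set H : Matrix {j // j ∈ S} {j // j ∈ S} ℝ := (X * P)ᵀ * G⁻¹ * (X * P) with hHdef
  have hH_psd : H.PosSemidef := by
    have h := hGinv_psd.conjTranspose_mul_mul_same (X * P)
    rwa [Matrix.conjTranspose_eq_transpose_of_trivial] at h
  have h1H : ((1 : Matrix {j // j ∈ S} {j // j ∈ S} ℝ) - H).PosSemidef := by
    have h := hQpsd.conjTranspose_mul_mul_same P
    have e : Pᴴ * (1 - Q) * P = 1 - H := by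
      rw [Matrix.conjTranspose_eq_transpose_of_trivial, Matrix.mul_sub, Matrix.sub_mul,
        Matrix.mul_one, hPtP, hHdef, hQdef, Matrix.transpose_mul]
      simp only [Matrix.mul_assoc]
    rwa [e] at h
  have hαH_psd : (α • H).PosSemidef := aux_smul_psd hα hH_psd
  have hsub_psd : ((α • (1 : Matrix {j // j ∈ S} {j // j ∈ S} ℝ)) - α • H).PosSemidef := by
    rw [← smul_sub]; exact aux_smul_psd hα h1H
  obtain ⟨hlow, hup⟩ := aux_det_one_add hαH_psd hsub_psd
  have hcard : Fintype.card {j // j ∈ S} = K := by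
    rw [Fintype.card_coe, hScard]
  rw [hcard] at hup
  -- decompose X Ω Xᵀ
  have hΩ : OmegaS η K S = (η/(d:ℝ)) • ((1 : Matrix (Fin d) (Fin d) ℝ) + α • D) := by
    have hc : η/(d:ℝ) * α = (1-η)/(K:ℝ) := by
      rw [hαdef]; field_simp
    rw [OmegaS, smul_add, smul_smul, hc, add_comm, ← hDdef]
  have hXΩ : X * OmegaS η K S * Xᵀ = (η/(d:ℝ)) • (G + α • (X * D * Xᵀ)) := by
    rw [hΩ, Matrix.mul_smul, Matrix.smul_mul, Matrix.mul_add, Matrix.add_mul, Matrix.mul_one,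
      ← hGdef, Matrix.mul_smul, Matrix.smul_mul]
  have hsplit : G + α • (X * D * Xᵀ) = G * (1 + G⁻¹ * (α • (X * D * Xᵀ))) := by
    rw [mul_add, mul_one, ← Matrix.mul_assoc, Matrix.mul_nonsing_inv _ hGunit, one_mul]
  have hcomm : ((1 : Matrix (Fin n) (Fin n) ℝ) + G⁻¹ * (α • (X * D * Xᵀ))).det
      = ((1 : Matrix {j // j ∈ S} {j // j ∈ S} ℝ) + α • H).det := by
    have e1 : G⁻¹ * (α • (X * D * Xᵀ)) = (G⁻¹ * (X * P)) * (α • ((X * P)ᵀ)) := by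
      rw [Matrix.mul_smul, Matrix.mul_smul]
      congr 1
      rw [← hPPt, Matrix.transpose_mul]
      simp only [Matrix.mul_assoc]
    have e2 : (α • ((X * P)ᵀ)) * (G⁻¹ * (X * P)) = α • H := by
      rw [Matrix.smul_mul, hHdef]
      congr 1
      rw [Matrix.mul_assoc]
    rw [e1, Matrix.det_one_add_mul_comm, e2]
  have hdetXΩ : (X * OmegaS η K S * Xᵀ).det
      = (η/(d:ℝ))^n * (G.det * ((1 : Matrix {j // j ∈ S} {j // j ∈ S} ℝ) + α • H).det) := by
    rw [hXΩ, Matrix.det_smul, hsplit, Matrix.det_mul, hcomm, Fintype.card_fin]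
  -- numeric bounds
  have hα1 : 1 + α ≤ (d:ℝ)/((K:ℝ)*η) := by
    rw [le_div_iff₀ (by positivity)]
    have hαval : α * ((K:ℝ)*η) = (d:ℝ)*(1-η) := by
      rw [hαdef]; field_simp
    nlinarith [mul_nonneg (sub_nonneg.mpr hKd') hη0.le]
  have hbound : (X * OmegaS η K S * Xᵀ).det
      ≤ (η/(d:ℝ))^n * (G.det * ((d:ℝ)/((K:ℝ)*η))^K) := by
    rw [hdetXΩ]
    apply mul_le_mul_of_nonneg_left _ (by positivity)
    apply mul_le_mul_of_nonneg_left _ hdetG.le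
    exact le_trans hup (pow_le_pow_left₀ (by positivity) hα1 K)
  have hpos : 0 < (X * OmegaS η K S * Xᵀ).det := by
    rw [hdetXΩ]
    exact mul_pos (by positivity) (mul_pos hdetG (lt_of_lt_of_le one_pos hlow))
  -- take logs
  have hmain : Real.log (X * OmegaS η K S * Xᵀ).det
      ≤ (n:ℝ) * (Real.log η - Real.log d)
        + ((K:ℝ) * (Real.log d - (Real.log K + Real.log η)) + Real.log G.det) := by
    have h := Real.log_le_log hpos hbound
    rw [Real.log_mul (by positivity) (by positivity),
      Real.log_mul hdetGne (by positivity),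
      Real.log_pow, Real.log_pow,
      Real.log_div hη0.ne' hd0.ne',
      Real.log_div hd0.ne' (by positivity),
      Real.log_mul hK0.ne' hη0.ne'] at h
    linarith
  -- finish
  have egoal1 : Real.log ((d:ℝ)/(K:ℝ)) = Real.log d - Real.log K :=
    Real.log_div hd0.ne' hK0.ne'
  have egoal2 : ((d:ℝ)⁻¹ • G).det = ((d:ℝ)⁻¹)^n * G.det := by
    rw [Matrix.det_smul, Fintype.card_fin]
  have egoal3 : Real.log (((d:ℝ)⁻¹)^n * G.det) = -((n:ℝ) * Real.log d) + Real.log G.det := by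
    rw [Real.log_mul (by positivity) hdetGne, Real.log_pow, Real.log_inv]; ring
  rw [egoal1, egoal2, egoal3]
  have hfin : (1 - (K:ℝ)/(n:ℝ)) * Real.log η + (K:ℝ)/(n:ℝ) * (Real.log d - Real.log K)
      + 1/(n:ℝ) * (-((n:ℝ) * Real.log d) + Real.log G.det)
      = (1/(n:ℝ)) * ((n:ℝ) * (Real.log η - Real.log d)
        + ((K:ℝ) * (Real.log d - (Real.log K + Real.log η)) + Real.log G.det)) := by
    field_simp; ring
  rw [hfin]
  exact mul_le_mul_of_nonneg_left hmain (by positivity)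
end
end
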